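/- The operator norm of the difference between the test operator and the target projection satisfies ‖Ω(𝒜) − |G⟩⟨G|‖ = (m−1)/m; equivalently, the spectral gap of Ω(𝒜) is ν(Ω(𝒜)) = 1/m. -/

import Mathlib

open scoped BigOperators ComplexOrder
open Matrix Complex

noncomputable section

/-- Computational-basis index set of `(ℂ²)^{⊗n}`. -/
abbrev QIdx (n : ℕ) := Fin n → Fin 2

/-- Linear operators on `(ℂ²)^{⊗n}`, represented as matrices. -/
abbrev QOp (n : ℕ) := Matrix (QIdx n) (QIdx n) ℂ

/-- A bit viewed as a real number. -/
def bR (b : Fin 2) : ℝ := (b : ℕ)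

/-- The ℓ²→ℓ² operator norm of a matrix. -/
noncomputable def opNorm {ι : Type*} [Fintype ι] [DecidableEq ι] (M : Matrix ι ι ℂ) : ℝ :=
  ‖Matrix.toEuclideanCLM (𝕜 := ℂ) M‖

/-- The weighted graph state `|G⟩`, as amplitudes
`⟨z|G⟩ = 2^{-n/2} ∏_{j<k} e^{i θ_{jk} z_j z_k}` (for symmetric `θ`,
`∑_{j<k} = (1/2) ∑_{j,k}`). -/
noncomputable def gVec (n : ℕ) (θ : Fin n → Fin n → ℝ) : QIdx n → ℂ :=
  fun z => ((Real.sqrt (2 ^ n))⁻¹ : ℝ) *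
    Complex.exp (Complex.I * ((1 / 2 * ∑ j, ∑ k, θ j k * bR (z j) * bR (z k) : ℝ) : ℂ))

/-- The rank-one projection `|G⟩⟨G|`. -/
noncomputable def gProj (n : ℕ) (θ : Fin n → Fin n → ℝ) : QOp n :=
  Matrix.vecMulVec (gVec n θ) (star (gVec n θ))

/-- `α_k(z) = ∑_{j ∈ C_k} θ_{jk} z_j` (using `θ_{jk} = 0` on non-edges). -/
noncomputable def alphaAngle (n : ℕ) (θ : Fin n → Fin n → ℝ) (k : Fin n) (z : QIdx n) : ℝ :=
  ∑ j, θ j k * bR (z j)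

/-- The discretization `α ↦ α^h`, the unique point `jπ/h` with
`jπ/h - π/(2h) ≤ α < jπ/h + π/(2h)`. -/
noncomputable def alphaH (h : ℕ) (α : ℝ) : ℝ :=
  (⌊(h : ℝ) * α / Real.pi + 1 / 2⌋ : ℤ) * Real.pi / h

/-- Matrix entry `⟨b|α⟩⟨α|b'⟩ = (1/2) e^{iα(b-b')}` of the projection onto
`|α⟩ = (|0⟩ + e^{iα}|1⟩)/√2`. -/
noncomputable def phaseFac (α : ℝ) (b b' : Fin 2) : ℂ :=
  (1 / 2 : ℂ) * Complex.exp (Complex.I * ((α * (bR b - bR b') : ℝ) : ℂ))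

/-- The projection `P_l = ∏_{k ∈ A_l} Q_k`, written out entrywise:
`P_l = ∑_z (⊗_{k∈A_l} |α_k(z)⟩⟨α_k(z)|) ⊗ |z⟩⟨z|_{A_l^c}`. -/
noncomputable def Pop (n : ℕ) (θ : Fin n → Fin n → ℝ) (A : Finset (Fin n)) : QOp n :=
  Matrix.of fun x y =>
    if ∀ j ∉ A, x j = y j then ∏ k ∈ A, phaseFac (alphaAngle n θ k x) (x k) (y k) else 0

/-- The test operator `Ω(𝒜) = (1/m) ∑_l P_l`. -/
noncomputable def OmegaA (n m : ℕ) (θ : Fin n → Fin n → ℝ) (A : Fin m → Finset (Fin n)) :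
    QOp n :=
  (m : ℂ)⁻¹ • ∑ l, Pop n θ (A l)

/-- The discretized projection `P_{l;h}` (replace `α_k(z)` by `α_k^h(z)`). -/
noncomputable def PopH (n : ℕ) (θ : Fin n → Fin n → ℝ) (h : ℕ) (A : Finset (Fin n)) : QOp n :=
  Matrix.of fun x y =>
    if ∀ j ∉ A, x j = y j then
      ∏ k ∈ A, phaseFac (alphaH h (alphaAngle n θ k x)) (x k) (y k) else 0

/-- The discretized test operator `Ω_h(𝒜) = (1/m) ∑_l P_{l;h}`. -/
noncomputable def OmegaAH (n m : ℕ) (θ : Fin n → Fin n → ℝ) (h : ℕ)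
    (A : Fin m → Finset (Fin n)) : QOp n :=
  (m : ℂ)⁻¹ • ∑ l, PopH n θ h (A l)

/-- Entry of the single-site operator `(1/h) |α⟩⟨α| + (1 - 1/h) I`. -/
noncomputable def mixFac (h : ℕ) (α : ℝ) (b b' : Fin 2) : ℂ :=
  (1 - (h : ℂ)⁻¹) * (if b = b' then 1 else 0) + (h : ℂ)⁻¹ * phaseFac α b b'

/-- `P̄_l = ∏_{k ∈ A_l} ((1/h(k)) Q_k + (1 - 1/h(k)) I)`, written out entrywise. -/
noncomputable def PBar (n : ℕ) (θ : Fin n → Fin n → ℝ) (hf : Fin n → ℕ) (A : Finset (Fin n)) :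
    QOp n :=
  Matrix.of fun x y =>
    if ∀ j ∉ A, x j = y j then ∏ k ∈ A, mixFac (hf k) (alphaAngle n θ k x) (x k) (y k) else 0

/-- `Ω̄(𝒜)_𝐡 = (1/m) ∑_l P̄_l`. -/
noncomputable def OmegaBar (n m : ℕ) (θ : Fin n → Fin n → ℝ) (hf : Fin n → ℕ)
    (A : Fin m → Finset (Fin n)) : QOp n :=
  (m : ℂ)⁻¹ • ∑ l, PBar n θ hf (A l)

/-- `P̄_{l;h} = ∏_{k ∈ A_l} ((1/h) Q_{k;h} + (1 - 1/h) I)`, written out entrywise. -/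
noncomputable def PBarH (n : ℕ) (θ : Fin n → Fin n → ℝ) (h : ℕ) (A : Finset (Fin n)) : QOp n :=
  Matrix.of fun x y =>
    if ∀ j ∉ A, x j = y j then
      ∏ k ∈ A, mixFac h (alphaH h (alphaAngle n θ k x)) (x k) (y k) else 0

/-- `Ω̄_h(𝒜) = (1/m) ∑_l P̄_{l;h}`. -/
noncomputable def OmegaBarH (n m : ℕ) (θ : Fin n → Fin n → ℝ) (h : ℕ)
    (A : Fin m → Finset (Fin n)) : QOp n :=
  (m : ℂ)⁻¹ • ∑ l, PBarH n θ h (A l)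

/-- Index set for `N+1` copies of the `n`-qubit space. -/
abbrev BIdx (n N : ℕ) := Fin (N + 1) → QIdx n

/-- `(⊗_{j ≠ i} Ω) ⊗ I_i` acting on the `N+1` copies. -/
noncomputable def testAll (n N : ℕ) (Ω : QOp n) (i : Fin (N + 1)) :
    Matrix (BIdx n N) (BIdx n N) ℂ :=
  Matrix.of fun x y =>
    (if x i = y i then 1 else 0) * ∏ j ∈ Finset.univ.erase i, Ω (x j) (y j)

/-- Acceptance probability `p = (1/(N+1)) ∑_i Tr[((⊗_{j≠i} Ω) ⊗ I_i) ρ]` of the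
`N`-random sampling test of `Ω` on a state `ρ` of `N+1` copies. -/
noncomputable def acceptProb (n N : ℕ) (Ω : QOp n) (ρ : Matrix (BIdx n N) (BIdx n N) ℂ) : ℝ :=
  (((N : ℂ) + 1)⁻¹ * ∑ i, (testAll n N Ω i * ρ).trace).re

/-- Partial trace over all copies except copy `i`. -/
noncomputable def ptraceAt (n N : ℕ) (i : Fin (N + 1))
    (M : Matrix (BIdx n N) (BIdx n N) ℂ) : QOp n :=
  Matrix.of fun a b => ∑ x : BIdx n N, if x i = a then M x (Function.update x i b) else 0

/-- The conditional state of the remaining copy given that the test is passed: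
`σ = (1/((N+1)p)) ∑_i Tr_{j≠i}[((⊗_{j≠i} Ω) ⊗ I_i) ρ]`. -/
noncomputable def condState (n N : ℕ) (Ω : QOp n) (ρ : Matrix (BIdx n N) (BIdx n N) ℂ) :
    QOp n :=
  (((((N : ℝ) + 1) * acceptProb n N Ω ρ : ℝ) : ℂ))⁻¹ •
    ∑ i, ptraceAt n N i (testAll n N Ω i * ρ)

/-- The i.i.d. state `(|G⟩⟨G|)^{⊗(N+1)}`. -/
noncomputable def iidState (n N : ℕ) (θ : Fin n → Fin n → ℝ) :
    Matrix (BIdx n N) (BIdx n N) ℂ :=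
  Matrix.of fun x y => ∏ j, gVec n θ (x j) * star (gVec n θ (y j))



namespace GSaux
open scoped Matrix.Norms.L2Operator

variable {ι : Type*} [Fintype ι] [DecidableEq ι]

lemma norm_one_matrix [Nonempty ι] : ‖(1 : Matrix ι ι ℂ)‖ = 1 := by
  rw [Matrix.cstar_norm_def, _root_.map_one, ContinuousLinearMap.one_def]
  exact ContinuousLinearMap.norm_id

lemma norm_unitary [Nonempty ι] (U : Matrix ι ι ℂ) (hU : Uᴴ * U = 1) : ‖U‖ = 1 := by
  have h := Matrix.l2_opNorm_conjTranspose_mul_self U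
  rw [hU, norm_one_matrix] at h
  nlinarith [norm_nonneg U]

lemma norm_unitary_conj [Nonempty ι] (U M : Matrix ι ι ℂ) (hU : Uᴴ * U = 1)
    (hU' : U * Uᴴ = 1) : ‖U * M * Uᴴ‖ = ‖M‖ := by
  have hnU : ‖U‖ = 1 := norm_unitary U hU
  have hnUc : ‖Uᴴ‖ = ‖U‖ := Matrix.l2_opNorm_conjTranspose U
  have key : ∀ N : Matrix ι ι ℂ, ‖U * N * Uᴴ‖ ≤ ‖N‖ := by
    intro N
    calc ‖U * N * Uᴴ‖ ≤ ‖U * N‖ * ‖Uᴴ‖ := Matrix.l2_opNorm_mul _ _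
      _ ≤ ‖U‖ * ‖N‖ * ‖Uᴴ‖ :=
        mul_le_mul_of_nonneg_right (Matrix.l2_opNorm_mul _ _) (norm_nonneg _)
      _ = ‖N‖ := by rw [hnUc, hnU]; ring
  refine le_antisymm (key M) ?_
  have hM : M = Uᴴ * (U * M * Uᴴ) * (Uᴴ)ᴴ := by
    rw [Matrix.conjTranspose_conjTranspose]
    calc M = (Uᴴ * U) * M * (Uᴴ * U) := by rw [hU]; simp
      _ = Uᴴ * (U * M * Uᴴ) * U := by noncomm_ring
  have key2 : ∀ N : Matrix ι ι ℂ, ‖Uᴴ * N * (Uᴴ)ᴴ‖ ≤ ‖N‖ := by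
    intro N
    calc ‖Uᴴ * N * (Uᴴ)ᴴ‖ ≤ ‖Uᴴ * N‖ * ‖(Uᴴ)ᴴ‖ := Matrix.l2_opNorm_mul _ _
      _ ≤ ‖Uᴴ‖ * ‖N‖ * ‖(Uᴴ)ᴴ‖ :=
        mul_le_mul_of_nonneg_right (Matrix.l2_opNorm_mul _ _) (norm_nonneg _)
      _ = ‖N‖ := by rw [Matrix.conjTranspose_conjTranspose, hnUc, hnU]; ring
  calc ‖M‖ = ‖Uᴴ * (U * M * Uᴴ) * (Uᴴ)ᴴ‖ := by rw [← hM]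
    _ ≤ ‖U * M * Uᴴ‖ := key2 _

lemma le_norm_diagonal (d : ι → ℂ) (i : ι) : ‖d i‖ ≤ ‖Matrix.diagonal d‖ := by
  rw [Matrix.cstar_norm_def]
  have h := (Matrix.toEuclideanCLM (𝕜 := ℂ) (Matrix.diagonal d)).le_opNorm
      ((WithLp.equiv 2 (ι → ℂ)).symm (Pi.single i 1))
  rw [(show ∀ (A : Matrix ι ι ℂ) (x : ι → ℂ), Matrix.toEuclideanCLM (𝕜 := ℂ) A ((WithLp.equiv 2 (ι → ℂ)).symm x) = (WithLp.equiv 2 (ι → ℂ)).symm (Matrix.toLin' A x) from fun _ _ => rfl)] at h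
  have h1 : Matrix.toLin' (Matrix.diagonal d) (Pi.single i 1) = Pi.single i (d i) := by
    ext j
    rw [Matrix.toLin'_apply, Matrix.mulVec_diagonal]
    by_cases hj : j = i
    · subst hj; simp
    · simp [Pi.single_eq_of_ne hj]
  rw [h1] at h
  have h2 : ∀ (c : ℂ), ‖(WithLp.equiv 2 (ι → ℂ)).symm (Pi.single i c)‖ = ‖c‖ := by
    intro c
    have : (WithLp.equiv 2 (ι → ℂ)).symm (Pi.single i c) = EuclideanSpace.single i c := rfl
    rw [this, EuclideanSpace.norm_single]
  rw [h2, h2, norm_one, mul_one] at h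
  exact h

lemma norm_diagonal_le (d : ι → ℂ) (c : ℝ) (hc : 0 ≤ c)
    (h : ∀ i, ‖d i‖ ≤ c) : ‖Matrix.diagonal d‖ ≤ c := by
  rw [Matrix.cstar_norm_def]
  apply ContinuousLinearMap.opNorm_le_bound _ hc
  intro x
  have hx : x = (WithLp.equiv 2 (ι → ℂ)).symm ((WithLp.equiv 2 (ι → ℂ)) x) := rfl
  rw [hx, (show ∀ (A : Matrix ι ι ℂ) (x : ι → ℂ), Matrix.toEuclideanCLM (𝕜 := ℂ) A ((WithLp.equiv 2 (ι → ℂ)).symm x) = (WithLp.equiv 2 (ι → ℂ)).symm (Matrix.toLin' A x) from fun _ _ => rfl), Matrix.toLin'_apply]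
  set y := (WithLp.equiv 2 (ι → ℂ)) x with hy
  have hnx : ‖(WithLp.equiv 2 (ι → ℂ)).symm y‖ = Real.sqrt (∑ i, ‖y i‖ ^ 2) := by
    rw [EuclideanSpace.norm_eq]; rfl
  have hn2 : ‖(WithLp.equiv 2 (ι → ℂ)).symm (Matrix.diagonal d *ᵥ y)‖
      = Real.sqrt (∑ i, ‖d i * y i‖ ^ 2) := by
    rw [EuclideanSpace.norm_eq]
    congr 1
    refine Finset.sum_congr rfl fun i _ => ?_
    rw [show ((WithLp.equiv 2 (ι → ℂ)).symm (Matrix.diagonal d *ᵥ y)) i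
        = d i * y i by simp [Matrix.mulVec_diagonal]]
  rw [hn2, hnx, ← Real.sqrt_sq hc, ← Real.sqrt_mul (sq_nonneg c)]
  apply Real.sqrt_le_sqrt
  rw [Finset.mul_sum]
  refine Finset.sum_le_sum fun i _ => ?_
  rw [norm_mul, mul_pow]
  have h1 : ‖d i‖ ^ 2 ≤ c ^ 2 := by nlinarith [norm_nonneg (d i), h i]
  exact mul_le_mul_of_nonneg_right h1 (sq_nonneg _)

end GSaux
namespace GSaux

/-- character factor `(-1)^{s t}` on one site -/
def chi2 (s t : Fin 2) : ℂ := if s = 1 ∧ t = 1 then -1 else 1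

lemma chi2_zero_left (t : Fin 2) : chi2 0 t = 1 := by simp [chi2]

lemma chi2_comm (s t : Fin 2) : chi2 s t = chi2 t s := by
  fin_cases s <;> fin_cases t <;> simp [chi2]

lemma conj_chi2 (s t : Fin 2) : (starRingEnd ℂ) (chi2 s t) = chi2 s t := by
  fin_cases s <;> fin_cases t <;> simp [chi2]

lemma chi2_sum (s s' : Fin 2) :
    ∑ t, chi2 s t * chi2 s' t = if s = s' then 2 else 0 := by
  fin_cases s <;> fin_cases s' <;> simp [Fin.sum_univ_two, chi2] <;> norm_num

/-- sum over functions of a product factorizes -/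
lemma sum_pi_prod {n : ℕ} (f : Fin n → Fin 2 → ℂ) :
    ∑ z : QIdx n, ∏ j, f j (z j) = ∏ j, ∑ t, f j t := by
  rw [Finset.prod_univ_sum]
  rw [Fintype.piFinset_univ]

/-- the phase function φ -/
noncomputable def phi (n : ℕ) (θ : Fin n → Fin n → ℝ) (z : QIdx n) : ℝ :=
  1 / 2 * ∑ j, ∑ k, θ j k * bR (z j) * bR (z k)

lemma gVec_eq (n : ℕ) (θ : Fin n → Fin n → ℝ) (z : QIdx n) :
    gVec n θ z = ((Real.sqrt (2 ^ n))⁻¹ : ℝ) *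
      Complex.exp (Complex.I * ((phi n θ z : ℝ) : ℂ)) := rfl

lemma gVec_mul_conj (n : ℕ) (θ : Fin n → Fin n → ℝ) (x y : QIdx n) :
    gVec n θ x * (starRingEnd ℂ) (gVec n θ y)
      = ((2 : ℂ) ^ n)⁻¹ * Complex.exp (Complex.I * ((phi n θ x - phi n θ y : ℝ) : ℂ)) := by
  rw [gVec_eq, gVec_eq, _root_.map_mul, ← Complex.exp_conj]
  rw [Complex.conj_ofReal]
  have h1 : (starRingEnd ℂ) (Complex.I * ((phi n θ y : ℝ) : ℂ))
      = -(Complex.I * ((phi n θ y : ℝ) : ℂ)) := by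
    rw [_root_.map_mul, Complex.conj_I, Complex.conj_ofReal]; ring
  rw [h1]
  have h2 : ((Real.sqrt (2 ^ n))⁻¹ : ℝ) * ((Real.sqrt (2 ^ n))⁻¹ : ℝ)
      = (((2 : ℝ) ^ n)⁻¹ : ℝ) := by
    rw [← mul_inv]
    rw [Real.mul_self_sqrt (by positivity)]
  have h3 : (((Real.sqrt (2 ^ n))⁻¹ : ℝ) : ℂ) * (((Real.sqrt (2 ^ n))⁻¹ : ℝ) : ℂ)
      = ((2 : ℂ) ^ n)⁻¹ := by
    rw [← Complex.ofReal_mul, h2]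
    push_cast
    ring
  calc (((Real.sqrt (2 ^ n))⁻¹ : ℝ) : ℂ) * Complex.exp (Complex.I * ((phi n θ x : ℝ) : ℂ)) *
        ((((Real.sqrt (2 ^ n))⁻¹ : ℝ) : ℂ) * Complex.exp (-(Complex.I * ((phi n θ y : ℝ) : ℂ))))
      = ((((Real.sqrt (2 ^ n))⁻¹ : ℝ) : ℂ) * (((Real.sqrt (2 ^ n))⁻¹ : ℝ) : ℂ)) *
        (Complex.exp (Complex.I * ((phi n θ x : ℝ) : ℂ)) *
          Complex.exp (-(Complex.I * ((phi n θ y : ℝ) : ℂ)))) := by ring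
    _ = ((2 : ℂ) ^ n)⁻¹ * Complex.exp (Complex.I * ((phi n θ x - phi n θ y : ℝ) : ℂ)) := by
        rw [h3, ← Complex.exp_add]
        congr 2
        push_cast
        ring

end GSaux
namespace GSaux

noncomputable def chi (n : ℕ) (a z : QIdx n) : ℂ := ∏ j, chi2 (a j) (z j)

lemma conj_chi (n : ℕ) (a z : QIdx n) : (starRingEnd ℂ) (chi n a z) = chi n a z := by
  rw [chi, map_prod]
  exact Finset.prod_congr rfl fun j _ => conj_chi2 _ _

lemma chi_zero (n : ℕ) (z : QIdx n) : chi n (fun _ => 0) z = 1 := by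
  rw [chi]
  exact Finset.prod_eq_one fun j _ => chi2_zero_left _

noncomputable def Umat (n : ℕ) (θ : Fin n → Fin n → ℝ) : QOp n :=
  Matrix.of fun z a => gVec n θ z * chi n a z

lemma two_pow_ne (n : ℕ) : ((2 : ℂ) ^ n) ≠ 0 := by positivity

lemma U_unitary (n : ℕ) (θ : Fin n → Fin n → ℝ) : (Umat n θ)ᴴ * Umat n θ = 1 := by
  ext a b
  rw [Matrix.mul_apply, Matrix.one_apply]
  have h1 : ∀ z : QIdx n, (Umat n θ)ᴴ a z * Umat n θ z b
      = ((2 : ℂ) ^ n)⁻¹ * ∏ j, (chi2 (a j) (z j) * chi2 (b j) (z j)) := by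
    intro z
    rw [Matrix.conjTranspose_apply, Umat, Matrix.of_apply, Matrix.of_apply]
    rw [star_mul', show ∀ w : ℂ, star w = (starRingEnd ℂ) w from fun _ => rfl,
      show ∀ w : ℂ, star w = (starRingEnd ℂ) w from fun _ => rfl, conj_chi]
    have := gVec_mul_conj n θ z z
    rw [sub_self] at this
    calc (starRingEnd ℂ) (gVec n θ z) * chi n a z * (gVec n θ z * chi n b z)
        = (gVec n θ z * (starRingEnd ℂ) (gVec n θ z)) * (chi n a z * chi n b z) := by ring
      _ = ((2 : ℂ) ^ n)⁻¹ * ∏ j, (chi2 (a j) (z j) * chi2 (b j) (z j)) := by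
          rw [this]
          simp only [Complex.ofReal_zero, mul_zero, Complex.exp_zero, mul_one]
          rw [chi, chi, ← Finset.prod_mul_distrib]
  rw [Finset.sum_congr rfl fun z _ => h1 z, ← Finset.mul_sum,
    sum_pi_prod (fun j t => chi2 (a j) t * chi2 (b j) t)]
  have h2 : ∀ j, ∑ t, chi2 (a j) t * chi2 (b j) t = if a j = b j then 2 else 0 :=
    fun j => chi2_sum _ _
  rw [Finset.prod_congr rfl fun j _ => h2 j]
  by_cases hab : a = b
  · subst hab
    rw [Finset.prod_congr rfl fun j _ => if_pos rfl, if_pos rfl]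
    rw [Finset.prod_const, Finset.card_univ, Fintype.card_fin]
    exact inv_mul_cancel₀ (two_pow_ne n)
  · obtain ⟨j, hj⟩ := Function.ne_iff.mp hab
    rw [Finset.prod_eq_zero (Finset.mem_univ j) (by rw [if_neg hj]), if_neg hab, mul_zero]

lemma U_unitary' (n : ℕ) (θ : Fin n → Fin n → ℝ) : Umat n θ * (Umat n θ)ᴴ = 1 :=
  mul_eq_one_comm.mp (U_unitary n θ)

lemma conj_entry (n : ℕ) (θ : Fin n → Fin n → ℝ) (e : QIdx n → ℂ) (x y : QIdx n) :
    (Umat n θ * Matrix.diagonal e * (Umat n θ)ᴴ) x y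
      = ∑ a, e a * ((gVec n θ x * (starRingEnd ℂ) (gVec n θ y)) * (chi n a x * chi n a y)) := by
  rw [Matrix.mul_apply]
  refine Finset.sum_congr rfl fun a _ => ?_
  rw [Matrix.mul_diagonal, Matrix.conjTranspose_apply, Umat, Matrix.of_apply, Matrix.of_apply]
  rw [star_mul', show ∀ w : ℂ, star w = (starRingEnd ℂ) w from fun _ => rfl,
    show ∀ w : ℂ, star w = (starRingEnd ℂ) w from fun _ => rfl, conj_chi]
  ring

lemma gProj_eq (n : ℕ) (θ : Fin n → Fin n → ℝ) :
    gProj n θ = Umat n θ * Matrix.diagonal (fun a => if a = (fun _ => 0) then 1 else 0)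
      * (Umat n θ)ᴴ := by
  ext x y
  rw [conj_entry]
  rw [Finset.sum_eq_single (fun _ => (0 : Fin 2))]
  · rw [if_pos rfl, chi_zero, chi_zero]
    rw [gProj, Matrix.vecMulVec_apply, Pi.star_apply, Complex.star_def]
    ring
  · intro a _ ha
    rw [if_neg ha, zero_mul]
  · intro h
    exact absurd (Finset.mem_univ _) h

end GSaux
namespace GSaux

lemma phi_diff (n : ℕ) (θ : Fin n → Fin n → ℝ) (A : Finset (Fin n))
    (hA : ∀ j ∈ A, ∀ k ∈ A, θ j k = 0) (hsym : ∀ j k, θ j k = θ k j)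
    (x y : QIdx n) (hxy : ∀ j ∉ A, x j = y j) :
    phi n θ x - phi n θ y = ∑ k ∈ A, alphaAngle n θ k x * (bR (x k) - bR (y k)) := by
  have key : (∑ j, ∑ k, θ j k * bR (x j) * bR (x k))
      - (∑ j, ∑ k, θ j k * bR (y j) * bR (y k))
      = 2 * ∑ k ∈ A, alphaAngle n θ k x * (bR (x k) - bR (y k)) := by
    have step1 : (∑ j, ∑ k, θ j k * bR (x j) * bR (x k))
        - (∑ j, ∑ k, θ j k * bR (y j) * bR (y k))
        = (∑ j, ∑ k, θ j k * bR (x j) * (bR (x k) - bR (y k)))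
          + (∑ j, ∑ k, θ j k * (bR (x j) - bR (y j)) * bR (y k)) := by
      rw [← Finset.sum_sub_distrib, ← Finset.sum_add_distrib]
      refine Finset.sum_congr rfl fun j _ => ?_
      rw [← Finset.sum_sub_distrib, ← Finset.sum_add_distrib]
      refine Finset.sum_congr rfl fun k _ => ?_
      ring
    have step2 : (∑ j, ∑ k, θ j k * (bR (x j) - bR (y j)) * bR (y k))
        = ∑ j, ∑ k, θ j k * bR (y j) * (bR (x k) - bR (y k)) := by
      rw [Finset.sum_comm]
      refine Finset.sum_congr rfl fun j _ => Finset.sum_congr rfl fun k _ => ?_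
      rw [hsym k j]
      ring
    have step3 : (∑ j, ∑ k, θ j k * bR (x j) * (bR (x k) - bR (y k)))
        + (∑ j, ∑ k, θ j k * bR (y j) * (bR (x k) - bR (y k)))
        = ∑ j, ∑ k, 2 * (θ j k * bR (x j) * (bR (x k) - bR (y k))) := by
      rw [← Finset.sum_add_distrib]
      refine Finset.sum_congr rfl fun j _ => ?_
      rw [← Finset.sum_add_distrib]
      refine Finset.sum_congr rfl fun k _ => ?_
      by_cases hk : k ∈ A
      · by_cases hj : j ∈ A
        · rw [hA j hj k hk]; ring
        · rw [← hxy j hj]; ring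
      · rw [hxy k hk]; ring
    have step4 : (∑ j, ∑ k, 2 * (θ j k * bR (x j) * (bR (x k) - bR (y k))))
        = 2 * ∑ k ∈ A, alphaAngle n θ k x * (bR (x k) - bR (y k)) := by
      rw [Finset.sum_comm]
      have inner : ∀ k, (∑ j, 2 * (θ j k * bR (x j) * (bR (x k) - bR (y k))))
          = 2 * (alphaAngle n θ k x * (bR (x k) - bR (y k))) := by
        intro k
        rw [alphaAngle, Finset.sum_mul, Finset.mul_sum]
      rw [Finset.sum_congr rfl fun k _ => inner k, ← Finset.mul_sum]
      congr 1
      rw [← Finset.sum_subset A.subset_univ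
        (fun k _ hk => by rw [hxy k hk]; simp)]
    rw [step1, step2, step3, step4]
  rw [phi, phi]
  linarith [key]

lemma Pop_eq (n : ℕ) (θ : Fin n → Fin n → ℝ) (A : Finset (Fin n))
    (hA : ∀ j ∈ A, ∀ k ∈ A, θ j k = 0) (hsym : ∀ j k, θ j k = θ k j) :
    Pop n θ A = Umat n θ *
      Matrix.diagonal (fun a => if ∀ k ∈ A, a k = 0 then 1 else 0) * (Umat n θ)ᴴ := by
  ext x y
  rw [conj_entry]
  -- rewrite each summand as a product over sites
  have hsummand : ∀ a : QIdx n,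
      (if ∀ k ∈ A, a k = 0 then (1:ℂ) else 0) *
        ((gVec n θ x * (starRingEnd ℂ) (gVec n θ y)) * (chi n a x * chi n a y))
      = (gVec n θ x * (starRingEnd ℂ) (gVec n θ y)) *
        ∏ j, ((if j ∈ A then (if a j = 0 then (1:ℂ) else 0) else 1)
          * (chi2 (a j) (x j) * chi2 (a j) (y j))) := by
    intro a
    have hind : (if ∀ k ∈ A, a k = 0 then (1:ℂ) else 0)
        = ∏ j, (if j ∈ A then (if a j = 0 then (1:ℂ) else 0) else 1) := by
      by_cases h : ∀ k ∈ A, a k = 0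
      · rw [if_pos h]
        symm
        refine Finset.prod_eq_one fun j _ => ?_
        by_cases hj : j ∈ A
        · rw [if_pos hj, if_pos (h j hj)]
        · rw [if_neg hj]
      · rw [if_neg h]
        push_neg at h
        obtain ⟨k, hk, hk0⟩ := h
        symm
        refine Finset.prod_eq_zero (Finset.mem_univ k) ?_
        rw [if_pos hk, if_neg hk0]
    have hchi : chi n a x * chi n a y = ∏ j, (chi2 (a j) (x j) * chi2 (a j) (y j)) := by
      rw [chi, chi, Finset.prod_mul_distrib]
    rw [hind, hchi, Finset.prod_mul_distrib, Finset.prod_mul_distrib,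
      Finset.prod_mul_distrib]
    ring
  rw [Finset.sum_congr rfl fun a _ => hsummand a, ← Finset.mul_sum,
    sum_pi_prod (fun j t => (if j ∈ A then (if t = 0 then (1:ℂ) else 0) else 1)
      * (chi2 t (x j) * chi2 t (y j)))]
  -- per-site sums
  have hsite : ∀ j, (∑ t, (if j ∈ A then (if t = 0 then (1:ℂ) else 0) else 1)
      * (chi2 t (x j) * chi2 t (y j)))
      = if j ∈ A then 1 else (if x j = y j then 2 else 0) := by
    intro j
    by_cases hj : j ∈ A
    · rw [if_pos hj]
      simp only [if_pos hj]
      rw [Fin.sum_univ_two]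
      norm_num [chi2]
    · rw [if_neg hj]
      simp only [if_neg hj, one_mul]
      rw [show (∑ t, chi2 t (x j) * chi2 t (y j))
          = ∑ t, chi2 (x j) t * chi2 (y j) t from
        Finset.sum_congr rfl fun t _ => by rw [chi2_comm t (x j), chi2_comm t (y j)]]
      exact chi2_sum _ _
  rw [Finset.prod_congr rfl fun j _ => hsite j]
  by_cases hxy : ∀ j ∉ A, x j = y j
  · -- diagonal case
    rw [Pop, Matrix.of_apply, if_pos hxy]
    have hprod : (∏ j, if j ∈ A then (1:ℂ) else (if x j = y j then 2 else 0))
        = 2 ^ (Fintype.card (Fin n) - A.card) := by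
      rw [← Finset.prod_mul_prod_compl A]
      rw [Finset.prod_congr rfl (fun j hj => if_pos hj), Finset.prod_const_one, one_mul]
      rw [Finset.prod_congr rfl (fun j hj => by
        rw [if_neg (Finset.mem_compl.mp hj), if_pos (hxy j (Finset.mem_compl.mp hj))])]
      rw [Finset.prod_const, Finset.card_compl]
    rw [hprod, gVec_mul_conj]
    have hlhs : (∏ k ∈ A, phaseFac (alphaAngle n θ k x) (x k) (y k))
        = (1/2 : ℂ) ^ A.card *
          Complex.exp (Complex.I *
            ((∑ k ∈ A, alphaAngle n θ k x * (bR (x k) - bR (y k)) : ℝ) : ℂ)) := by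
      simp only [phaseFac]
      rw [Finset.prod_mul_distrib, Finset.prod_const]
      congr 1
      rw [← Complex.exp_sum]
      congr 1
      rw [Complex.ofReal_sum, Finset.mul_sum]
    rw [hlhs, phi_diff n θ A hA hsym x y hxy]
    have hcard : A.card ≤ n := by simpa using A.card_le_univ
    rw [Fintype.card_fin, pow_sub₀ (2:ℂ) two_ne_zero hcard]
    have h2c : ((2:ℂ) ^ A.card) ≠ 0 := by positivity
    field_simp
    rw [← mul_pow]; norm_num
  · rw [Pop, Matrix.of_apply, if_neg hxy]
    push_neg at hxy
    obtain ⟨j, hj, hne⟩ := hxy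
    rw [Finset.prod_eq_zero (Finset.mem_univ j) (by rw [if_neg hj, if_neg hne]), mul_zero]

end GSaux

namespace GSaux

open scoped Matrix.Norms.L2Operator in
lemma opNorm_UDU (n : ℕ) (θ : Fin n → Fin n → ℝ) (d : QIdx n → ℂ) (c : ℝ) (hc : 0 ≤ c)
    (hub : ∀ a, ‖d a‖ ≤ c) (hlb : ∃ a, ‖d a‖ = c) :
    opNorm (Umat n θ * Matrix.diagonal d * (Umat n θ)ᴴ) = c := by
  have h0 : opNorm (Umat n θ * Matrix.diagonal d * (Umat n θ)ᴴ)
      = ‖Umat n θ * Matrix.diagonal d * (Umat n θ)ᴴ‖ := rfl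
  rw [h0, norm_unitary_conj _ _ (U_unitary n θ) (U_unitary' n θ)]
  refine le_antisymm (norm_diagonal_le d c hc hub) ?_
  obtain ⟨a, ha⟩ := hlb
  rw [← ha]
  exact le_norm_diagonal d a

end GSaux


/-- `‖Ω(𝒜) - |G⟩⟨G|‖ = (m-1)/m`, equivalently the spectral gap is `ν(Ω(𝒜)) = 1/m`. -/
theorem opNorm_OmegaA_sub_gProj
    (n m : ℕ) (hn : 1 ≤ n) (hm : 1 ≤ m)
    (G : SimpleGraph (Fin n)) (θ : Fin n → Fin n → ℝ)
    (hsym : ∀ j k, θ j k = θ k j)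
    (hθ : ∀ j k, ¬ G.Adj j k → θ j k = 0)
    (A : Fin m → Finset (Fin n))
    (hdisj : ∀ l l', l ≠ l' → Disjoint (A l) (A l'))
    (hcover : ∀ v : Fin n, ∃ l, v ∈ A l)
    (hne : ∀ l, (A l).Nonempty)
    (hind : ∀ l, ∀ j ∈ A l, ∀ k ∈ A l, ¬ G.Adj j k)
    :
    opNorm (OmegaA n m θ A - gProj n θ) = ((m : ℝ) - 1) / m ∧
    1 - opNorm (OmegaA n m θ A - gProj n θ) = 1 / (m : ℝ) := by
  classical
  have hm1 : (1 : ℝ) ≤ m := by exact_mod_cast hm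
  have hmpos : (0 : ℝ) < m := by linarith
  have hm0 : (m : ℝ) ≠ 0 := ne_of_gt hmpos
  have hA' : ∀ l, ∀ j ∈ A l, ∀ k ∈ A l, θ j k = 0 :=
    fun l j hj k hk => hθ j k (hind l j hj k hk)
  have hsumdiag : (∑ l, Matrix.diagonal
        (fun a => if ∀ k ∈ A l, a k = 0 then (1 : ℂ) else 0))
      = Matrix.diagonal (fun a : QIdx n =>
          (((Finset.univ.filter fun l : Fin m => ∀ k ∈ A l, a k = 0).card : ℕ) : ℂ)) := by
    ext a b
    rw [Matrix.sum_apply]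
    by_cases hab : a = b
    · subst hab
      simp only [Matrix.diagonal_apply_eq]
      rw [Finset.sum_boole]
    · simp [Matrix.diagonal_apply_ne _ hab]
  have h1 : OmegaA n m θ A
      = GSaux.Umat n θ * ((m : ℂ)⁻¹ • Matrix.diagonal (fun a : QIdx n =>
          (((Finset.univ.filter fun l : Fin m => ∀ k ∈ A l, a k = 0).card : ℕ) : ℂ)))
        * (GSaux.Umat n θ)ᴴ := by
    rw [Matrix.mul_smul, Matrix.smul_mul, OmegaA]
    congr 1
    rw [Finset.sum_congr rfl fun l _ => GSaux.Pop_eq n θ (A l) (hA' l) hsym,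
      ← Matrix.sum_mul, ← Matrix.mul_sum, hsumdiag]
  set dC : QIdx n → ℂ :=
    fun a => ((((Finset.univ.filter fun l : Fin m => ∀ k ∈ A l, a k = 0).card : ℝ) / m
      - (if a = (fun _ => 0) then 1 else 0) : ℝ) : ℂ) with hdC
  have hM : OmegaA n m θ A - gProj n θ
      = GSaux.Umat n θ * Matrix.diagonal dC * (GSaux.Umat n θ)ᴴ := by
    rw [h1, GSaux.gProj_eq n θ, ← Matrix.sub_mul, ← Matrix.mul_sub]
    congr 2
    have hsm : (m : ℂ)⁻¹ • Matrix.diagonal (fun a : QIdx n =>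
          (((Finset.univ.filter fun l : Fin m => ∀ k ∈ A l, a k = 0).card : ℕ) : ℂ))
        = Matrix.diagonal (fun a : QIdx n => (m : ℂ)⁻¹ *
          (((Finset.univ.filter fun l : Fin m => ∀ k ∈ A l, a k = 0).card : ℕ) : ℂ)) := by
      rw [← Matrix.diagonal_smul]
      congr 1
    rw [hsm, Matrix.diagonal_sub]
    apply congrArg Matrix.diagonal
    funext a
    show (m : ℂ)⁻¹ * _ - _ = _
    simp only [hdC]
    by_cases ha : a = (fun _ => 0)
    · rw [if_pos ha]
      push_cast
      rw [if_pos ha]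
      push_cast
      ring
    · rw [if_neg ha]
      push_cast
      rw [if_neg ha]
      push_cast
      ring
  set c : ℝ := ((m : ℝ) - 1) / m with hcdef
  have hc : 0 ≤ c := div_nonneg (by linarith) (le_of_lt hmpos)
  have hN0 : (Finset.univ.filter fun l : Fin m =>
      ∀ k ∈ A l, (fun _ : Fin n => (0 : Fin 2)) k = 0) = Finset.univ :=
    Finset.filter_true_of_mem (fun l _ k _ => rfl)
  have hub : ∀ a, ‖dC a‖ ≤ c := by
    intro a
    simp only [hdC]
    rw [Complex.norm_real, Real.norm_eq_abs]
    by_cases ha : a = (fun _ => 0)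
    · subst ha
      rw [if_pos rfl, hN0, Finset.card_univ, Fintype.card_fin, div_self hm0]
      simpa using hc
    · rw [if_neg ha]
      obtain ⟨v, hv⟩ := Function.ne_iff.mp ha
      obtain ⟨l0, hl0⟩ := hcover v
      have hsub : (Finset.univ.filter fun l : Fin m => ∀ k ∈ A l, a k = 0)
          ⊆ Finset.univ.erase l0 := by
        intro l hl
        rw [Finset.mem_filter] at hl
        rw [Finset.mem_erase]
        refine ⟨?_, Finset.mem_univ _⟩
        rintro rfl
        exact hv (hl.2 v hl0)
      have hcard : (Finset.univ.filter fun l : Fin m => ∀ k ∈ A l, a k = 0).card ≤ m - 1 := by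
        calc _ ≤ (Finset.univ.erase l0).card := Finset.card_le_card hsub
          _ = m - 1 := by rw [Finset.card_erase_of_mem (Finset.mem_univ _),
            Finset.card_univ, Fintype.card_fin]
      have hcastc : (((Finset.univ.filter fun l : Fin m => ∀ k ∈ A l, a k = 0).card : ℕ) : ℝ)
          ≤ (m : ℝ) - 1 := by
        have := (Nat.cast_le (α := ℝ)).mpr hcard
        rwa [Nat.cast_sub hm, Nat.cast_one] at this
      rw [sub_zero, _root_.abs_of_nonneg (by positivity), hcdef]
      exact (div_le_div_iff_of_pos_right hmpos).mpr hcastc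
  have hlb : ∃ a, ‖dC a‖ = c := by
    obtain ⟨l0, hl0⟩ := hcover ⟨0, hn⟩
    refine ⟨fun j => if j = (⟨0, hn⟩ : Fin n) then 1 else 0, ?_⟩
    have ha0 : (fun j => if j = (⟨0, hn⟩ : Fin n) then (1 : Fin 2) else 0) ≠ (fun _ => 0) := by
      intro h
      have := congrFun h ⟨0, hn⟩
      simp at this
    have hfil : (Finset.univ.filter fun l : Fin m =>
        ∀ k ∈ A l, (fun j => if j = (⟨0, hn⟩ : Fin n) then (1 : Fin 2) else 0) k = 0)
        = Finset.univ.erase l0 := by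
      ext l
      rw [Finset.mem_filter, Finset.mem_erase]
      constructor
      · rintro ⟨-, h⟩
        refine ⟨?_, Finset.mem_univ _⟩
        rintro rfl
        have := h _ hl0
        simp at this
      · rintro ⟨hne', -⟩
        refine ⟨Finset.mem_univ _, fun k hk => ?_⟩
        have hkv : k ≠ (⟨0, hn⟩ : Fin n) := by
          rintro rfl
          exact (Finset.disjoint_left.mp (hdisj l l0 hne') hk) hl0
        simp [hkv]
    simp only [hdC]
    rw [if_neg ha0, sub_zero, hfil, Finset.card_erase_of_mem (Finset.mem_univ _),
      Finset.card_univ, Fintype.card_fin, Complex.norm_real, Real.norm_eq_abs,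
      Nat.cast_sub hm, Nat.cast_one]
    exact _root_.abs_of_nonneg hc
  have hmain : opNorm (OmegaA n m θ A - gProj n θ) = c := by
    rw [hM]
    exact GSaux.opNorm_UDU n θ dC c hc hub hlb
  refine ⟨hmain, ?_⟩
  rw [hmain, hcdef]
  field_simp
  ring


end
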